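/- Let (Ω, 𝔄, ℙ) be a probability space, σ > 0, and ε : Ω → ℝⁿ a random vector whose coordinates ε₁,…,ε_n are mutually independent, each with law N(0, σ²). Let X and X̃ be n×m real matrices, Σ = XᵀX symmetric, and D a symmetric m×m real matrix with X̃ᵀX̃ = Σ and XᵀX̃ = Σ − D, and let β ∈ ℝᵐ and Y = Xβ + ε. Then the ℝᵐ-valued random vectors ω ↦ (X + X̃)ᵀ Y(ω) and ω ↦ (X − X̃)ᵀ Y(ω) are independent. -/

import Mathlib

open Matrix MeasureTheory ProbabilityTheory Real
open scoped ENNReal NNReal RealInnerProductSpace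

lemma lintegral_pi_prod : ∀ (k : ℕ) (f : Fin k → ℝ → ℝ≥0∞), (∀ i, Measurable (f i)) →
    ∫⁻ x : Fin k → ℝ, ∏ i, f i (x i) ∂(Measure.pi fun _ => (volume : Measure ℝ))
      = ∏ i, ∫⁻ y, f i y
  | 0, f, hf => by
      rw [Measure.pi_of_empty]
      simp
  | (k+1), f, hf => by
      have hMP := measurePreserving_piFinSuccAbove (fun _ : Fin (k+1) => (volume : Measure ℝ)) 0
      set G : ℝ × (Fin k → ℝ) → ℝ≥0∞ :=
        fun q => f 0 q.1 * ∏ j : Fin k, f (Fin.succ j) (q.2 j) with hG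
      have hGmeas : Measurable G := by
        apply Measurable.mul
        · exact (hf 0).comp measurable_fst
        · exact Finset.measurable_prod _ fun j _ =>
            (hf (Fin.succ j)).comp ((measurable_pi_apply j).comp measurable_snd)
      have h1 : ∫⁻ x : Fin (k+1) → ℝ, ∏ i, f i (x i) ∂(Measure.pi fun _ => volume)
          = ∫⁻ x, G (MeasurableEquiv.piFinSuccAbove (fun _ => ℝ) 0 x)
              ∂(Measure.pi fun _ => volume) := by
        refine lintegral_congr fun x => ?_
        simp only [hG, MeasurableEquiv.piFinSuccAbove, MeasurableEquiv.coe_mk,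
          Fin.insertNthEquiv_symm_apply, Fin.removeNth, Fin.tail]
        rw [Fin.prod_univ_succ]
        simp [Fin.succAbove_zero]
        rfl
      rw [h1, hMP.lintegral_comp hGmeas, lintegral_prod _ hGmeas.aemeasurable]
      have IH := lintegral_pi_prod k (fun j => f (Fin.succ j)) (fun j => hf (Fin.succ j))
      simp only [hG]
      rw [Fin.prod_univ_succ]
      have hpm : Measurable fun y : Fin k → ℝ => ∏ j : Fin k, f (Fin.succ j) (y j) :=
        Finset.measurable_prod _ fun j _ => (hf (Fin.succ j)).comp (measurable_pi_apply j)
      calc ∫⁻ x, ∫⁻ y : Fin k → ℝ, f 0 x * ∏ j : Fin k, f (Fin.succ j) (y j)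
              ∂(Measure.pi fun _ => volume) ∂volume
          = ∫⁻ x, f 0 x * ∫⁻ y : Fin k → ℝ, ∏ j : Fin k, f (Fin.succ j) (y j)
              ∂(Measure.pi fun _ => volume) ∂volume := by
            refine lintegral_congr fun x => ?_
            rw [lintegral_const_mul _ hpm]
        _ = (∫⁻ x, f 0 x) * ∏ j : Fin k, ∫⁻ y, f (Fin.succ j) y := by
            rw [IH, lintegral_mul_const _ (hf 0)]

lemma gauss_pi (k : ℕ) {v : ℝ≥0} (hv : v ≠ 0) :
    Measure.pi (fun _ : Fin k => gaussianReal 0 v)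
      = (Measure.pi fun _ : Fin k => (volume : Measure ℝ)).withDensity
          fun x => ∏ i, gaussianPDF 0 v (x i) := by
  refine Measure.pi_eq fun A hA => ?_
  rw [withDensity_apply _ (MeasurableSet.univ_pi hA)]
  have h1 : ∫⁻ x in Set.univ.pi A, ∏ i, gaussianPDF 0 v (x i) ∂(Measure.pi fun _ => volume)
      = ∫⁻ x, ∏ i, (A i).indicator (gaussianPDF 0 v) (x i) ∂(Measure.pi fun _ => volume) := by
    rw [← lintegral_indicator (MeasurableSet.univ_pi hA)]
    refine lintegral_congr fun x => ?_
    by_cases hx : x ∈ Set.univ.pi A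
    · rw [Set.indicator_of_mem hx]
      exact Finset.prod_congr rfl fun i _ =>
        (Set.indicator_of_mem (hx i trivial) _).symm
    · rw [Set.indicator_of_notMem hx]
      have hx2 : ∃ i, x i ∉ A i := by
        by_contra hcon
        push_neg at hcon
        exact hx fun i _ => hcon i
      obtain ⟨i, hi⟩ := hx2
      exact (Finset.prod_eq_zero (Finset.mem_univ i) (Set.indicator_of_notMem hi _)).symm
  rw [h1, lintegral_pi_prod k _ (fun i => (measurable_gaussianPDF 0 v).indicator (hA i))]
  refine Finset.prod_congr rfl fun i _ => ?_
  rw [gaussianReal_apply 0 hv (A i), ← lintegral_indicator (hA i)]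

lemma gauss_prod_invariant {k : ℕ} (v : ℝ≥0) {Q : Matrix (Fin k) (Fin k) ℝ}
    (hQ' : Q * Qᵀ = 1) (y : Fin k → ℝ) :
    ∏ i, gaussianPDF 0 v ((Qᵀ *ᵥ y) i) = ∏ i, gaussianPDF 0 v (y i) := by
  have key : ∀ z : Fin k → ℝ, ∏ i, gaussianPDF 0 v (z i)
      = ENNReal.ofReal ((Real.sqrt (2 * π * v))⁻¹ ^ k * Real.exp ((∑ i, -(z i) ^ 2) / (2 * v))) := by
    intro z
    have h0 : ∀ i : Fin k, gaussianPDF 0 v (z i)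
        = ENNReal.ofReal ((Real.sqrt (2 * π * v))⁻¹ * Real.exp (-(z i) ^ 2 / (2 * v))) := by
      intro i
      simp [gaussianPDF, gaussianPDFReal]
    simp_rw [h0]
    rw [← ENNReal.ofReal_prod_of_nonneg (fun i _ => by positivity)]
    congr 1
    rw [Finset.prod_mul_distrib, Finset.prod_const, ← Real.exp_sum, Finset.card_univ,
      Fintype.card_fin]
    congr 1
    rw [Finset.sum_div]
  rw [key, key]
  have hz : ∀ z : Fin k → ℝ, ∑ i, -(z i) ^ 2 = -(z ⬝ᵥ z) := by
    intro z; simp [dotProduct, sq, Finset.sum_neg_distrib]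
  have hsum : ∑ i, -((Qᵀ *ᵥ y) i) ^ 2 = ∑ i, -(y i) ^ 2 := by
    rw [hz, hz, dotProduct_mulVec, vecMul_transpose, mulVec_mulVec, hQ', one_mulVec]
  rw [hsum]

lemma gauss_rot {k : ℕ} {v : ℝ≥0} (hv : v ≠ 0) {Q : Matrix (Fin k) (Fin k) ℝ}
    (hQ : Qᵀ * Q = 1) :
    (Measure.pi fun _ : Fin k => gaussianReal 0 v).map (Q.mulVec)
      = Measure.pi fun _ : Fin k => gaussianReal 0 v := by
  have hQ' : Q * Qᵀ = 1 := mul_eq_one_comm.mp hQ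
  have hdet : Q.det * Q.det = 1 := by
    have := congrArg Matrix.det hQ
    rwa [Matrix.det_mul, Matrix.det_transpose, Matrix.det_one] at this
  have hdet1 : |Q.det| = 1 := by
    rcases mul_self_eq_one_iff.mp hdet with h | h <;> simp [h]
  have hdet0 : Q.det ≠ 0 := by
    intro h; rw [h] at hdet; norm_num at hdet
  have hmeasQ : Measurable (Q.mulVec) := by
    have h1 : Continuous (Matrix.toLin' Q) := LinearMap.continuous_on_pi _
    have h2 : (Q.mulVec) = ⇑(Matrix.toLin' Q) := by
      funext x; rw [Matrix.toLin'_apply]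
    rw [h2]; exact h1.measurable
  have hmeasQt : Measurable (Qᵀ.mulVec) := by
    have h1 : Continuous (Matrix.toLin' Qᵀ) := LinearMap.continuous_on_pi _
    have h2 : (Qᵀ.mulVec) = ⇑(Matrix.toLin' Qᵀ) := by
      funext x; rw [Matrix.toLin'_apply]
    rw [h2]; exact h1.measurable
  have hMP : MeasurePreserving (Qᵀ.mulVec) (Measure.pi fun _ : Fin k => (volume : Measure ℝ))
      (Measure.pi fun _ : Fin k => (volume : Measure ℝ)) := by
    refine ⟨hmeasQt, ?_⟩
    have h2 : (Qᵀ.mulVec) = ⇑(Matrix.toLin' Qᵀ) := by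
      funext x; rw [Matrix.toLin'_apply]
    rw [← volume_pi, h2, Real.map_matrix_volume_pi_eq_smul_volume_pi (by
      rw [Matrix.det_transpose]; exact hdet0)]
    rw [Matrix.det_transpose, abs_inv, hdet1]
    norm_num
  have hg : Measurable fun x : Fin k → ℝ => ∏ i, gaussianPDF 0 v (x i) :=
    Finset.measurable_prod _ fun i _ => (measurable_gaussianPDF 0 v).comp (measurable_pi_apply i)
  ext s hs
  rw [Measure.map_apply hmeasQ hs, gauss_pi k hv,
    withDensity_apply _ (hmeasQ hs), withDensity_apply _ hs]
  rw [← hMP.setLIntegral_comp_preimage (hmeasQ hs) hg]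
  have hset : Qᵀ.mulVec ⁻¹' (Q.mulVec ⁻¹' s) = s := by
    ext y; simp [Set.mem_preimage, mulVec_mulVec, hQ', one_mulVec]
  rw [hset]
  exact lintegral_congr fun a => gauss_prod_invariant v hQ' a

lemma exists_orth_basis {n m : ℕ} (A B : Matrix (Fin m) (Fin n) ℝ) (hAB : A * Bᵀ = 0) :
    ∃ (Q : Matrix (Fin n) (Fin n) ℝ) (p : Fin n → Bool),
      Qᵀ * Q = 1 ∧
      (∀ j, p j = true → ∀ i, (B * Qᵀ) i j = 0) ∧
      (∀ j, p j = false → ∀ i, (A * Qᵀ) i j = 0) := by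
  classical
  let e : EuclideanSpace ℝ (Fin n) ≃ₗ[ℝ] (Fin n → ℝ) := WithLp.linearEquiv 2 ℝ (Fin n → ℝ)
  let L : EuclideanSpace ℝ (Fin n) →ₗ[ℝ] (Fin m → ℝ) := (Matrix.mulVecLin B).comp e.toLinearMap
  set K : Submodule ℝ (EuclideanSpace ℝ (Fin n)) := LinearMap.ker L with hK
  have hmemK : ∀ x : EuclideanSpace ℝ (Fin n), x ∈ K ↔ B *ᵥ (e x) = 0 := by
    intro x; rfl
  -- rows of B as elements of E
  let r : Fin m → EuclideanSpace ℝ (Fin n) := fun j => e.symm (B j)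
  have hrx : ∀ (j : Fin m) (x : EuclideanSpace ℝ (Fin n)), ⟪r j, x⟫ = (B *ᵥ (e x)) j := by
    intro j x
    simp only [PiLp.inner_apply, RCLike.inner_apply, conj_trivial]
    simp [r, mulVec, dotProduct, e, mul_comm]
  set W : Submodule ℝ (EuclideanSpace ℝ (Fin n)) := Submodule.span ℝ (Set.range r) with hW
  have hWK : W ≤ Kᗮ := by
    rw [Submodule.span_le]
    rintro _ ⟨j, rfl⟩
    rw [SetLike.mem_coe, Submodule.mem_orthogonal]
    intro u hu
    rw [real_inner_comm, hrx j u, (hmemK u).mp hu]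
    rfl
  have hWoK : Wᗮ ≤ K := by
    intro x hx
    rw [hmemK]
    funext j
    have : ⟪r j, x⟫ = 0 :=
      hx (r j) (Submodule.subset_span ⟨j, rfl⟩)
    rw [← hrx j x, this]; rfl
  have hKoW : Kᗮ ≤ W := by
    have h1 : Kᗮ ≤ Wᗮᗮ := Submodule.orthogonal_le hWoK
    rwa [Submodule.orthogonal_orthogonal] at h1
  have hAkill : ∀ x : EuclideanSpace ℝ (Fin n), x ∈ Kᗮ → A *ᵥ (e x) = 0 := by
    intro x hx
    have hxW : x ∈ W := hKoW hx
    have hsub : W ≤ LinearMap.ker ((Matrix.mulVecLin A).comp e.toLinearMap) := by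
      rw [Submodule.span_le]
      rintro _ ⟨j, rfl⟩
      have : A *ᵥ (B j) = 0 := by
        funext i
        have := congrFun (congrFun hAB i) j
        simpa [mulVec, dotProduct, Matrix.mul_apply] using this
      simp only [SetLike.mem_coe, LinearMap.mem_ker, LinearMap.comp_apply]
      simpa [r, Matrix.mulVecLin] using this
    exact hsub hxW
  -- orthonormal basis adapted to K, Kᗮ
  let V : Bool → Submodule ℝ (EuclideanSpace ℝ (Fin n)) := fun b => cond b K Kᗮ
  have hV' : OrthogonalFamily ℝ (fun b => V b) (fun b => (V b).subtypeₗᵢ) := by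
    intro i j hij v w
    match i, j with
    | true, true => exact absurd rfl hij
    | false, false => exact absurd rfl hij
    | true, false =>
      exact Submodule.inner_right_of_mem_orthogonal v.2 w.2
    | false, true =>
      rw [real_inner_comm]
      exact Submodule.inner_right_of_mem_orthogonal w.2 v.2
  haveI : CompleteSpace K := FiniteDimensional.complete ℝ K
  have hV : DirectSum.IsInternal V := by
    rw [OrthogonalFamily.isInternal_iff]
    · rw [iSup_bool_eq]
      show (K ⊔ Kᗮ)ᗮ = ⊥
      rw [Submodule.sup_orthogonal_of_hasOrthogonalProjection, Submodule.top_orthogonal_eq_bot]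
    · exact hV'
  have hn : Module.finrank ℝ (EuclideanSpace ℝ (Fin n)) = n := finrank_euclideanSpace_fin
  let b := hV.subordinateOrthonormalBasis hn hV'
  let idx : Fin n → Bool := fun j => hV.subordinateOrthonormalBasisIndex hn j hV'
  have hsub : ∀ j, b j ∈ V (idx j) :=
    fun j => hV.subordinateOrthonormalBasis_subordinate hn j hV'
  refine ⟨Matrix.of fun j i => b j i, idx, ?_, ?_, ?_⟩
  · rw [mul_eq_one_comm]
    ext j k
    have horth := orthonormal_iff_ite.mp b.orthonormal j k
    rw [PiLp.inner_apply] at horth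
    simp only [RCLike.inner_apply, conj_trivial] at horth
    simpa [Matrix.mul_apply, Matrix.one_apply, mul_comm] using horth
  · intro j hj i
    have hbK : b j ∈ K := by have := hsub j; rwa [hj] at this
    have : B *ᵥ (e (b j)) = 0 := (hmemK _).mp hbK
    have := congrFun this i
    simpa [Matrix.mul_apply, mulVec, dotProduct, e] using this
  · intro j hj i
    have hbK : b j ∈ Kᗮ := by have := hsub j; rwa [hj] at this
    have : A *ᵥ (e (b j)) = 0 := hAkill _ hbK
    have := congrFun this i
    simpa [Matrix.mul_apply, mulVec, dotProduct, e] using this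

lemma measurable_mulVec' {a b : ℕ} (M : Matrix (Fin a) (Fin b) ℝ) :
    Measurable (M.mulVec) := by
  have h1 : Continuous (Matrix.mulVecLin M) := LinearMap.continuous_on_pi _
  have h2 : (M.mulVec) = ⇑(Matrix.mulVecLin M) := rfl
  rw [h2]; exact h1.measurable

/-- Independence of the two knockoff-assisted linear statistics: in the Gaussian linear model
`Y = Xβ + ε` with `ε ~ N_n(0, σ²I_n)` (i.i.d. `N(0, σ²)` coordinates) and `X̃` a knockoff
matrix for `X` (`X̃ᵀX̃ = Σ = XᵀX`, `XᵀX̃ = Σ - D`, `Σ`, `D` symmetric), the random vectors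
`(X + X̃)ᵀY` and `(X - X̃)ᵀY` are independent. -/
theorem knockoff_statistics_independent {n m : ℕ}
    {Ω : Type*} [MeasurableSpace Ω] (μ : Measure Ω) [IsProbabilityMeasure μ]
    (σ : ℝ) (hσ : 0 < σ)
    (ε : Ω → Fin n → ℝ)
    (hmeas : ∀ i, Measurable (fun ω => ε ω i))
    (hindep : iIndepFun (fun i ω => ε ω i) μ)
    (hgauss : ∀ i, Measure.map (fun ω => ε ω i) μ
      = gaussianReal 0 (⟨σ ^ 2, sq_nonneg σ⟩ : NNReal))
    (X Xt : Matrix (Fin n) (Fin m) ℝ) (Sg D : Matrix (Fin m) (Fin m) ℝ)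
    (hSg : Sg = Xᵀ * X) (hSgsymm : Sg.IsSymm) (hDsymm : D.IsSymm)
    (hXt : Xtᵀ * Xt = Sg) (hXXt : Xᵀ * Xt = Sg - D)
    (β : Fin m → ℝ) (Y : Ω → Fin n → ℝ) (hY : ∀ ω, Y ω = X *ᵥ β + ε ω) :
    IndepFun (fun ω => (X + Xt)ᵀ *ᵥ Y ω) (fun ω => (X - Xt)ᵀ *ᵥ Y ω) μ := by
  classical
  set v : ℝ≥0 := (⟨σ ^ 2, sq_nonneg σ⟩ : NNReal) with hvdef
  have hv : v ≠ 0 := by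
    intro h
    have h2 : (v : ℝ) = 0 := by rw [h]; simp
    have h3 : (0:ℝ) < σ ^ 2 := by positivity
    rw [hvdef] at h2
    change σ ^ 2 = 0 at h2
    linarith
  set A : Matrix (Fin m) (Fin n) ℝ := (X + Xt)ᵀ with hAdef
  set B : Matrix (Fin m) (Fin n) ℝ := (X - Xt)ᵀ with hBdef
  have hXtX : Xtᵀ * X = Sg - D := by
    have h := congrArg Matrix.transpose hXXt
    rwa [Matrix.transpose_mul, Matrix.transpose_transpose, Matrix.transpose_sub,
      hSgsymm, hDsymm] at h
  have hAB : A * Bᵀ = 0 := by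
    rw [hAdef, hBdef, Matrix.transpose_transpose, Matrix.transpose_add, Matrix.add_mul,
      Matrix.mul_sub, Matrix.mul_sub, ← hSg, hXXt, hXtX, hXt]
    abel
  obtain ⟨Q, p, hQ, hBcol, hAcol⟩ := exists_orth_basis A B hAB
  have hmeasε : Measurable ε := measurable_pi_iff.mpr hmeas
  -- the law of ε is the product Gaussian
  have hlaw : μ.map ε = Measure.pi fun _ : Fin n => gaussianReal 0 v := by
    refine (Measure.pi_eq fun S hS => ?_).symm
    rw [Measure.map_apply hmeasε (MeasurableSet.univ_pi hS)]
    have hpre : ε ⁻¹' Set.univ.pi S = ⋂ i ∈ Finset.univ, (fun ω => ε ω i) ⁻¹' S i := by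
      ext ω; simp [Set.mem_pi]
    rw [hpre, (iIndepFun_iff_measure_inter_preimage_eq_mul.mp hindep) Finset.univ
      (fun i _ => hS i)]
    refine Finset.prod_congr rfl fun i _ => ?_
    rw [← hgauss i, Measure.map_apply (hmeas i) (hS i)]
  -- rotated noise
  set η : Ω → Fin n → ℝ := fun ω => Q *ᵥ ε ω with hηdef
  have hmeasη : Measurable η := (measurable_mulVec' Q).comp hmeasε
  have hlawη : μ.map η = Measure.pi fun _ : Fin n => gaussianReal 0 v := by
    have : η = Q.mulVec ∘ ε := rfl
    rw [this, ← Measure.map_map (measurable_mulVec' Q) hmeasε, hlaw, gauss_rot hv hQ]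
  -- split into coordinates where p is true / false
  set p' : Fin n → Prop := fun j => p j = true with hp'def
  set f1 : Ω → {j : Fin n // p' j} → ℝ := fun ω j => η ω j.1 with hf1def
  set f2 : Ω → {j : Fin n // ¬ p' j} → ℝ := fun ω j => η ω j.1 with hf2def
  have hmf1 : Measurable f1 := measurable_pi_iff.mpr fun j => (measurable_pi_apply j.1).comp hmeasη
  have hmf2 : Measurable f2 := measurable_pi_iff.mpr fun j => (measurable_pi_apply j.1).comp hmeasη
  set π₁ : Measure ({j : Fin n // p' j} → ℝ) :=
    Measure.pi fun _ => gaussianReal 0 v with hπ₁def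
  set π₂ : Measure ({j : Fin n // ¬ p' j} → ℝ) :=
    Measure.pi fun _ => gaussianReal 0 v with hπ₂def
  have hMPe := measurePreserving_piEquivPiSubtypeProd (fun _ : Fin n => gaussianReal 0 v) p'
  set e := MeasurableEquiv.piEquivPiSubtypeProd (fun _ : Fin n => ℝ) p' with hedef
  have hpair : (fun ω => (f1 ω, f2 ω)) = ⇑e ∘ η := rfl
  have hmpair : Measurable fun ω => (f1 ω, f2 ω) := by
    rw [hpair]; exact e.measurable.comp hmeasη
  have hmap_pair : μ.map (fun ω => (f1 ω, f2 ω)) = π₁.prod π₂ := by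
    rw [hpair, ← Measure.map_map e.measurable hmeasη, hlawη, hMPe.map_eq]
  have hmap1 : μ.map f1 = π₁ := by
    have h1 : f1 = Prod.fst ∘ (fun ω => (f1 ω, f2 ω)) := rfl
    rw [h1, ← Measure.map_map measurable_fst hmpair, hmap_pair, Measure.map_fst_prod]
    simp
  have hmap2 : μ.map f2 = π₂ := by
    have h1 : f2 = Prod.snd ∘ (fun ω => (f1 ω, f2 ω)) := rfl
    rw [h1, ← Measure.map_map measurable_snd hmpair, hmap_pair, Measure.map_snd_prod]
    simp
  have hIndep12 : IndepFun f1 f2 μ := by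
    rw [indepFun_iff_map_prod_eq_prod_map_map hmf1.aemeasurable hmf2.aemeasurable,
      hmap_pair, hmap1, hmap2]
  -- the two statistics as functions of f1 and f2
  set c : Fin n → ℝ := X *ᵥ β with hcdef
  set Φ : ({j : Fin n // p' j} → ℝ) → (Fin m → ℝ) :=
    fun z i => (A *ᵥ c) i + ∑ j : {j : Fin n // p' j}, (A * Qᵀ) i j.1 * z j with hΦdef
  set Ψ : ({j : Fin n // ¬ p' j} → ℝ) → (Fin m → ℝ) :=
    fun z i => (B *ᵥ c) i + ∑ j : {j : Fin n // ¬ p' j}, (B * Qᵀ) i j.1 * z j with hΨdef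
  have hmΦ : Measurable Φ := by
    refine measurable_pi_iff.mpr fun i => ?_
    exact measurable_const.add (Finset.measurable_sum _ fun j _ =>
      (measurable_pi_apply j).const_mul _)
  have hmΨ : Measurable Ψ := by
    refine measurable_pi_iff.mpr fun i => ?_
    exact measurable_const.add (Finset.measurable_sum _ fun j _ =>
      (measurable_pi_apply j).const_mul _)
  have hrot : ∀ (M : Matrix (Fin m) (Fin n) ℝ) (x : Fin n → ℝ),
      M *ᵥ x = (M * Qᵀ) *ᵥ (Q *ᵥ x) := by
    intro M x
    rw [mulVec_mulVec, Matrix.mul_assoc, hQ, Matrix.mul_one]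
  have hkey1 : (fun ω => (X + Xt)ᵀ *ᵥ Y ω) = Φ ∘ f1 := by
    funext ω
    show A *ᵥ Y ω = Φ (f1 ω)
    rw [hY ω, mulVec_add]
    funext i
    show (A *ᵥ c) i + (A *ᵥ ε ω) i = (A *ᵥ c) i + ∑ j : {j : Fin n // p' j}, (A * Qᵀ) i j.1 * η ω j.1
    congr 1
    rw [hrot A (ε ω)]
    show ∑ j, (A * Qᵀ) i j * η ω j = _
    rw [← Finset.sum_filter_of_ne (p := fun j => p' j) (by
      intro x _ hx
      by_contra hpx
      have hfalse : p x = false := by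
        cases hpq : p x
        · rfl
        · exact absurd hpq hpx
      exact hx (by rw [hAcol x hfalse i, zero_mul]))]
    rw [Finset.sum_subtype (p := p') (Finset.univ.filter fun j => p' j)
      (by intro x; simp) (fun j => (A * Qᵀ) i j * η ω j)]
  have hkey2 : (fun ω => (X - Xt)ᵀ *ᵥ Y ω) = Ψ ∘ f2 := by
    funext ω
    show B *ᵥ Y ω = Ψ (f2 ω)
    rw [hY ω, mulVec_add]
    funext i
    show (B *ᵥ c) i + (B *ᵥ ε ω) i
      = (B *ᵥ c) i + ∑ j : {j : Fin n // ¬ p' j}, (B * Qᵀ) i j.1 * η ω j.1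
    congr 1
    rw [hrot B (ε ω)]
    show ∑ j, (B * Qᵀ) i j * η ω j = _
    rw [← Finset.sum_filter_of_ne (p := fun j => ¬ p' j) (by
      intro x _ hx
      by_contra hpx
      exact hx (by rw [hBcol x hpx i, zero_mul]))]
    rw [Finset.sum_subtype (p := fun j => ¬ p' j) (Finset.univ.filter fun j => ¬ p' j)
      (by intro x; simp) (fun j => (B * Qᵀ) i j * η ω j)]
  rw [hkey1, hkey2]
  exact hIndep12.comp hmΦ hmΨ
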